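/- Let $A, B, C$ be $p \times p$ positive semidefinite real matrices and $z > 0$. Then $|\mathrm{Tr}(C(zI+A)^{-1}) - \mathrm{Tr}(C(zI+B)^{-1})| \le \mathrm{rank}(A-B) \cdot \|C\| / z$, where $\|C\|$ denotes the operator norm. -/

import Mathlib

open Matrix
open scoped RealInnerProductSpace


noncomputable def opNorm {p : ℕ} (M : Matrix (Fin p) (Fin p) ℝ) : ℝ :=
  ‖Matrix.toEuclideanCLM (𝕜 := ℝ) M‖

lemma quad_le_opNorm {p : ℕ} (C : Matrix (Fin p) (Fin p) ℝ) (x : Fin p → ℝ) :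
    x ⬝ᵥ (C *ᵥ x) ≤ opNorm C * (x ⬝ᵥ x) := by
  have h1 : x ⬝ᵥ (C *ᵥ x) = ⟪((WithLp.equiv 2 _).symm x : EuclideanSpace ℝ (Fin p)),
      Matrix.toEuclideanCLM (𝕜 := ℝ) C ((WithLp.equiv 2 _).symm x)⟫ := by
    rw [WithLp.equiv_symm_apply, Matrix.toEuclideanCLM_toLp]
    simp [PiLp.inner_apply, dotProduct, RCLike.inner_apply, mul_comm]
  have h2 : x ⬝ᵥ x = ‖((WithLp.equiv 2 _).symm x : EuclideanSpace ℝ (Fin p))‖ ^ 2 := by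
    rw [← real_inner_self_eq_norm_sq]
    simp only [PiLp.inner_apply, dotProduct, RCLike.inner_apply, WithLp.equiv_symm_apply,
      PiLp.toLp_apply, conj_trivial, mul_comm]
  rw [h1, h2]
  set T := Matrix.toEuclideanCLM (𝕜 := ℝ) C
  set y : EuclideanSpace ℝ (Fin p) := (WithLp.equiv 2 _).symm x
  calc ⟪y, T y⟫ ≤ ‖y‖ * ‖T y‖ := real_inner_le_norm _ _
    _ ≤ ‖y‖ * (‖T‖ * ‖y‖) := by
        have := T.le_opNorm y
        nlinarith [norm_nonneg y, norm_nonneg (T y)]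
    _ = ‖T‖ * ‖y‖ ^ 2 := by ring

lemma resolvent_posdef {p : ℕ} {A : Matrix (Fin p) (Fin p) ℝ} (hA : A.PosSemidef)
    {z : ℝ} (hz : 0 < z) : (z • (1 : Matrix (Fin p) (Fin p) ℝ) + A).PosDef := by
  have h1 : (z • (1 : Matrix (Fin p) (Fin p) ℝ)).PosDef := by
    rw [smul_one_eq_diagonal]
    exact posDef_diagonal_iff.mpr fun i => hz
  exact h1.add_posSemidef hA

lemma resolvent_quad_nonneg {p : ℕ} {A : Matrix (Fin p) (Fin p) ℝ} (hA : A.PosSemidef)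
    {z : ℝ} (hz : 0 < z) (x : Fin p → ℝ) :
    0 ≤ x ⬝ᵥ ((z • (1 : Matrix (Fin p) (Fin p) ℝ) + A)⁻¹ *ᵥ x) := by
  have := (resolvent_posdef hA hz).inv.posSemidef.dotProduct_mulVec_nonneg x
  simpa using this

lemma resolvent_quad_le {p : ℕ} {A : Matrix (Fin p) (Fin p) ℝ} (hA : A.PosSemidef)
    {z : ℝ} (hz : 0 < z) (x : Fin p → ℝ) :
    x ⬝ᵥ ((z • (1 : Matrix (Fin p) (Fin p) ℝ) + A)⁻¹ *ᵥ x) ≤ (x ⬝ᵥ x) / z := by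
  have hpd := resolvent_posdef hA hz
  set S := z • (1 : Matrix (Fin p) (Fin p) ℝ) + A with hS
  set y := S⁻¹ *ᵥ x with hy
  have hxy : S *ᵥ y = x := by
    rw [hy, mulVec_mulVec, mul_nonsing_inv _ ((Matrix.isUnit_iff_isUnit_det _).mp hpd.isUnit),
      one_mulVec]
  have ht0 : 0 ≤ x ⬝ᵥ y := resolvent_quad_nonneg hA hz x
  have hAy : 0 ≤ y ⬝ᵥ (A *ᵥ y) := by simpa using hA.dotProduct_mulVec_nonneg y
  have key : x ⬝ᵥ y = z * (y ⬝ᵥ y) + y ⬝ᵥ (A *ᵥ y) := by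
    conv_lhs => rw [← hxy]
    rw [hS, add_mulVec, smul_mulVec, one_mulVec, add_dotProduct, smul_dotProduct,
      dotProduct_comm (A *ᵥ y) y]
    simp
  have hCS : (x ⬝ᵥ y) ^ 2 ≤ (x ⬝ᵥ x) * (y ⬝ᵥ y) := by
    have := Finset.sum_mul_sq_le_sq_mul_sq Finset.univ x y
    simpa [dotProduct, pow_two] using this
  have hy0 : 0 ≤ y ⬝ᵥ y := Finset.sum_nonneg fun i _ => mul_self_nonneg _
  have hx0 : 0 ≤ x ⬝ᵥ x := Finset.sum_nonneg fun i _ => mul_self_nonneg _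
  rw [le_div_iff₀ hz]
  have hzny : z * (y ⬝ᵥ y) ≤ x ⬝ᵥ y := by linarith
  rcases ht0.eq_or_lt with h | h
  · nlinarith
  · have hmain : z * (x ⬝ᵥ y) * (x ⬝ᵥ y) ≤ (x ⬝ᵥ x) * (x ⬝ᵥ y) := by
      nlinarith [mul_le_mul_of_nonneg_left hCS hz.le, mul_le_mul_of_nonneg_left hzny hx0]
    have := le_of_mul_le_mul_right hmain h
    linarith

theorem stmt0 {p : ℕ} (A B C : Matrix (Fin p) (Fin p) ℝ)
    (hA : A.PosSemidef) (hB : B.PosSemidef) (hC : C.PosSemidef)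
    (z : ℝ) (hz : 0 < z) :
    |(C * (z • (1 : Matrix (Fin p) (Fin p) ℝ) + A)⁻¹).trace
        - (C * (z • (1 : Matrix (Fin p) (Fin p) ℝ) + B)⁻¹).trace|
      ≤ ((A - B).rank : ℝ) * opNorm C / z := by
  classical
  set SA := z • (1 : Matrix (Fin p) (Fin p) ℝ) + A with hSA
  set SB := z • (1 : Matrix (Fin p) (Fin p) ℝ) + B with hSB
  have hpdA := resolvent_posdef hA hz
  have hpdB := resolvent_posdef hB hz
  have hdetA : IsUnit SA.det := (Matrix.isUnit_iff_isUnit_det _).mp hpdA.isUnit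
  have hdetB : IsUnit SB.det := (Matrix.isUnit_iff_isUnit_det _).mp hpdB.isUnit
  have hdetRA : IsUnit SA⁻¹.det := (Matrix.isUnit_iff_isUnit_det _).mp hpdA.inv.isUnit
  have hdetRB : IsUnit SB⁻¹.det := (Matrix.isUnit_iff_isUnit_det _).mp hpdB.inv.isUnit
  set M := SA⁻¹ - SB⁻¹ with hMdef
  have hM : M.IsHermitian :=
    (hpdA.inv.posSemidef.isHermitian).sub (hpdB.inv.posSemidef.isHermitian)
  -- resolvent identity
  have hMid : SA⁻¹ * (B - A) * SB⁻¹ = M := by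
    have hBA : B - A = SB - SA := by rw [hSA, hSB]; abel
    rw [hBA, mul_sub, sub_mul, mul_assoc, mul_nonsing_inv _ hdetB, mul_one,
      nonsing_inv_mul _ hdetA, one_mul, hMdef]
  -- rank identity
  have hrank : M.rank = (A - B).rank := by
    rw [← hMid, rank_mul_eq_left_of_isUnit_det _ _ hdetRB,
      rank_mul_eq_right_of_isUnit_det _ _ hdetRA]
    have h4 : (B - A) = ((-1 : ℝ) • 1) * (A - B) := by
      rw [Matrix.smul_mul, one_mul, neg_one_smul, neg_sub]
    rw [h4, rank_mul_eq_right_of_isUnit_det]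
    rw [Matrix.det_smul, det_one, mul_one]
    simp only [Fintype.card_fin]
    exact (isUnit_one.neg).pow p
  -- trace rewriting
  have htrace : (C * SA⁻¹).trace - (C * SB⁻¹).trace = (C * M).trace := by
    rw [hMdef, mul_sub, trace_sub]
  rw [htrace]
  -- spectral decomposition of M
  set U : Matrix (Fin p) (Fin p) ℝ := (hM.eigenvectorUnitary : Matrix (Fin p) (Fin p) ℝ) with hU
  set μ : Fin p → ℝ := hM.eigenvalues with hμ
  set N := star U * C * U with hN
  have htr2 : (C * M).trace = ∑ i, N i i * μ i := by
    set D := diagonal ((RCLike.ofReal : ℝ → ℝ) ∘ μ) with hD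
    calc (C * M).trace = (C * (U * D * star U)).trace := by
          conv_lhs => rw [hM.spectral_theorem, Unitary.conjStarAlgAut_apply]
      _ = ((C * U * D) * star U).trace := by rw [← mul_assoc, ← mul_assoc]
      _ = (star U * (C * U * D)).trace := trace_mul_comm _ _
      _ = (N * D).trace := by rw [hN, ← mul_assoc, ← mul_assoc]
      _ = ∑ i, N i i * μ i := by
          simp [Matrix.trace, Matrix.diag, hD, Matrix.mul_diagonal]
  rw [htr2]
  -- columns of U
  have hcol : ∀ i, (fun j => U j i) = ⇑(hM.eigenvectorBasis i) := by
    intro i; funext j; rw [hU]; exact hM.eigenvectorUnitary_apply j i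
  have hvN : ∀ i, N i i = (⇑(hM.eigenvectorBasis i)) ⬝ᵥ (C *ᵥ ⇑(hM.eigenvectorBasis i)) := by
    intro i
    rw [← hcol i]
    simp only [hN, Matrix.mul_apply, Matrix.star_apply, star_trivial, dotProduct, Matrix.mulVec,
      Finset.sum_mul, Finset.mul_sum]
    rw [Finset.sum_comm]
    exact Finset.sum_congr rfl fun k _ => Finset.sum_congr rfl fun j _ => by ring
  have hnorm : ∀ i, (⇑(hM.eigenvectorBasis i) : Fin p → ℝ) ⬝ᵥ ⇑(hM.eigenvectorBasis i) = 1 := by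
    intro i
    have h := hM.eigenvectorBasis.orthonormal.1 i
    have h2 : ⟪hM.eigenvectorBasis i, hM.eigenvectorBasis i⟫ = (1 : ℝ) := by
      rw [real_inner_self_eq_norm_sq, h]; norm_num
    simp only [PiLp.inner_apply, RCLike.inner_apply, conj_trivial] at h2
    simpa [dotProduct, mul_comm] using h2
  -- eigenvalue bound
  have hμi : ∀ i, |μ i| ≤ 1 / z := by
    intro i
    have he : μ i = (⇑(hM.eigenvectorBasis i)) ⬝ᵥ (M *ᵥ ⇑(hM.eigenvectorBasis i)) := by
      simpa using hM.eigenvalues_eq i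
    set v : Fin p → ℝ := ⇑(hM.eigenvectorBasis i) with hv
    have hsplit : v ⬝ᵥ (M *ᵥ v) = v ⬝ᵥ (SA⁻¹ *ᵥ v) - v ⬝ᵥ (SB⁻¹ *ᵥ v) := by
      rw [hMdef, sub_mulVec, dotProduct_sub]
    have h1 := resolvent_quad_nonneg hA hz v
    have h2 := resolvent_quad_le hA hz v
    have h3 := resolvent_quad_nonneg hB hz v
    have h4 := resolvent_quad_le hB hz v
    rw [← hSA] at h1 h2
    rw [← hSB] at h3 h4
    rw [hnorm i] at h2 h4
    rw [he]
    rw [abs_le]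
    constructor <;> [skip; skip] <;> rw [hsplit] <;> linarith
  -- diagonal entry bound
  have hN0 : ∀ i, 0 ≤ N i i := by
    intro i
    rw [hvN i]
    simpa using hC.dotProduct_mulVec_nonneg (⇑(hM.eigenvectorBasis i))
  have hN1 : ∀ i, N i i ≤ opNorm C := by
    intro i
    have := quad_le_opNorm C (⇑(hM.eigenvectorBasis i))
    rw [hnorm i, mul_one] at this
    rw [hvN i]; exact this
  -- final estimate
  have hcard : (Finset.univ.filter (fun i => μ i ≠ 0)).card = (A - B).rank := by
    rw [← hrank, hM.rank_eq_card_non_zero_eigs, Fintype.card_subtype]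
  calc |∑ i, N i i * μ i| ≤ ∑ i, |N i i * μ i| := Finset.abs_sum_le_sum_abs _ _
    _ = ∑ i ∈ Finset.univ.filter (fun i => μ i ≠ 0), |N i i * μ i| := by
        refine (Finset.sum_filter_of_ne fun i _ hne => ?_).symm
        intro h0
        exact hne (by rw [h0, mul_zero, abs_zero])
    _ ≤ (Finset.univ.filter (fun i => μ i ≠ 0)).card • (opNorm C * (1 / z)) := by
        refine Finset.sum_le_card_nsmul _ _ _ fun i _ => ?_
        rw [abs_mul, abs_of_nonneg (hN0 i)]
        exact mul_le_mul (hN1 i) (hμi i) (abs_nonneg _) (norm_nonneg _)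
    _ = ((A - B).rank : ℝ) * opNorm C / z := by
        rw [nsmul_eq_mul, hcard]
        ring
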